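/- Under these hypotheses the modular operator preserves the coinvariant subalgebra: if b ∈ B satisfies F(b) = b ⊗ 1, then F(Θ(b)) = Θ(b) ⊗ 1. -/

import Mathlib

open TensorProduct

lemma my_antipode_one {A : Type*} [Ring A] [HopfAlgebra ℂ A] :
    HopfAlgebra.antipode (R := ℂ) (A := A) 1 = 1 := by
  have h := HopfAlgebra.mul_antipode_rTensor_comul_apply (R := ℂ) (A := A) 1
  rw [Bialgebra.comul_one] at h
  simpa [Algebra.TensorProduct.one_def] using h

lemma my_separation {B : Type*} [Ring B] [Algebra ℂ B] {A : Type*} [Ring A] [Algebra ℂ A]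
    (ω : B →ₗ[ℂ] ℂ)
    (hnondeg : ∀ x : B, (∀ b : B, ω (x * b) = 0) → x = 0)
    (t : B ⊗[ℂ] A)
    (h : ∀ x : B,
      TensorProduct.map (ω ∘ₗ LinearMap.mulRight ℂ x) (LinearMap.id (M := A)) t = 0) :
    t = 0 := by
  classical
  set bA := Module.Basis.ofVectorSpace ℂ A
  set e : B ⊗[ℂ] A ≃ₗ[ℂ] (_ →₀ B) :=
    (TensorProduct.congr (LinearEquiv.refl ℂ B) bA.repr).trans
      (TensorProduct.finsuppScalarRight ℂ ℂ B _) with he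
  have key : ∀ (f : B →ₗ[ℂ] ℂ) (s : B ⊗[ℂ] A) i,
      bA.repr ((TensorProduct.lid ℂ A) (TensorProduct.map f LinearMap.id s)) i = f (e s i) := by
    intro f s i
    induction s using TensorProduct.induction_on with
    | zero => simp
    | tmul b a =>
        simp [he, TensorProduct.finsuppScalarRight_apply_tmul_apply, mul_comm]
    | add x y hx hy => simp [map_add, hx, hy]
  suffices he0 : e t = 0 by
    have := congrArg e.symm he0
    simpa using this
  ext i
  refine hnondeg (e t i) fun x => ?_
  have := key (ω ∘ₗ LinearMap.mulRight ℂ x) t i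
  rw [h x] at this
  simpa [mul_comm] using this.symm

lemma my_lid_map_antipode {A : Type*} [Ring A] [HopfAlgebra ℂ A]
    {B : Type*} [Ring B] [Algebra ℂ B] (f : B →ₗ[ℂ] ℂ) (s : B ⊗[ℂ] A) :
    (TensorProduct.lid ℂ A) (TensorProduct.map f (HopfAlgebra.antipode (R := ℂ) (A := A)) s) =
      HopfAlgebra.antipode (R := ℂ) (A := A)
        ((TensorProduct.lid ℂ A) (TensorProduct.map f LinearMap.id s)) := by
  induction s using TensorProduct.induction_on with
  | zero => simp
  | tmul b a => simp
  | add x y hx hy => simp [map_add, hx, hy]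


/-- the modular operator preserves the coinvariant subalgebra: if `b : B`
satisfies `F b = b ⊗ 1`, then `F (Θ b) = Θ b ⊗ 1`. -/
theorem modular_operator_preserves_coinvariants
    {A : Type*} [Ring A] [HopfAlgebra ℂ A]
    (hκ : Function.Bijective (HopfAlgebra.antipode (R := ℂ) (A := A)))
    {B : Type*} [Ring B] [Algebra ℂ B]
    (F : B →ₐ[ℂ] B ⊗[ℂ] A)
    -- coassociativity of the coaction: (F ⊗ id) ∘ F = (id ⊗ Δ) ∘ F
    (hF1 : ∀ b : B,
      (TensorProduct.assoc ℂ B A A) ((LinearMap.rTensor A F.toLinearMap) (F b)) =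
        (LinearMap.lTensor B (Coalgebra.comul (R := ℂ) (A := A))) (F b))
    -- counit axiom of the coaction: (id ⊗ ε) ∘ F = id
    (hF2 : ∀ b : B,
      (TensorProduct.rid ℂ B) ((LinearMap.lTensor B (Coalgebra.counit (R := ℂ) (A := A))) (F b)) = b)
    (ω : B →ₗ[ℂ] ℂ)
    (hnondeg : ∀ x : B, (∀ b : B, ω (x * b) = 0) → x = 0)
    (Θ : B →ₗ[ℂ] B)
    (hmod : ∀ f g : B, ω (f * g) = ω (Θ g * f))
    -- invariance property: Σ ω(b q₍₀₎) κ(q₍₁₎) = Σ ω(b₍₀₎ q) b₍₁₎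
    (hinv : ∀ b q : B,
      ((TensorProduct.lid ℂ A).toLinearMap ∘ₗ
        TensorProduct.map (ω ∘ₗ LinearMap.mulLeft ℂ b)
          (HopfAlgebra.antipode (R := ℂ) (A := A))) (F q) =
      ((TensorProduct.lid ℂ A).toLinearMap ∘ₗ
        TensorProduct.map (ω ∘ₗ LinearMap.mulRight ℂ q) LinearMap.id) (F b)) :
    ∀ b : B, F b = b ⊗ₜ[ℂ] (1 : A) → F (Θ b) = (Θ b) ⊗ₜ[ℂ] (1 : A) := by
  intro b hb
  -- Step A: for all x, lid (map (ω∘mulRight b) id (F x)) = ω(x*b) • 1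
  have stepA : ∀ x : B,
      (TensorProduct.lid ℂ A) (TensorProduct.map (ω ∘ₗ LinearMap.mulRight ℂ b)
        (LinearMap.id (M := A)) (F x)) = ω (x * b) • (1 : A) := by
    intro x
    have h := hinv x b
    rw [hb] at h
    simp only [LinearMap.comp_apply, LinearEquiv.coe_coe, TensorProduct.map_tmul] at h
    rw [← h]
    simp [my_antipode_one]
  -- Step B: ω ∘ mulLeft (Θ b) = ω ∘ mulRight b
  have stepB : (ω ∘ₗ LinearMap.mulLeft ℂ (Θ b)) = (ω ∘ₗ LinearMap.mulRight ℂ b) := by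
    ext x
    simp only [LinearMap.comp_apply, LinearMap.mulLeft_apply, LinearMap.mulRight_apply]
    exact (hmod x b).symm
  -- Step D: lid (map (ω∘mulRight x) id (F (Θ b))) = ω(Θ b * x) • 1
  have stepD : ∀ x : B,
      (TensorProduct.lid ℂ A) (TensorProduct.map (ω ∘ₗ LinearMap.mulRight ℂ x)
        (LinearMap.id (M := A)) (F (Θ b))) = ω (Θ b * x) • (1 : A) := by
    intro x
    have h := hinv (Θ b) x
    simp only [LinearMap.comp_apply, LinearEquiv.coe_coe] at h
    rw [stepB, my_lid_map_antipode, stepA x] at h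
    rw [← h]
    simp [my_antipode_one, hmod x b]
  -- conclude via separation
  have hzero : F (Θ b) - (Θ b) ⊗ₜ[ℂ] (1 : A) = 0 := by
    refine my_separation ω hnondeg _ fun x => ?_
    apply (TensorProduct.lid ℂ A).injective
    rw [map_sub, map_sub, stepD x]
    simp
  rw [sub_eq_zero] at hzero
  exact hzero
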